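/- If N is a subgroup of a group A generated by finitely many conjugates of a finite subgroup C, and every element of C has only finitely many A-conjugates (C lies in the FC-centre of A), then the normal closure N of C in A is finite. -/

import Mathlib

open Subgroup
open scoped commutatorElement

/-- If an element has a finite conjugacy class, its centralizer has finite index. -/
private lemma aux_centralizer_finiteIndex {A : Type*} [Group A] (s : A)
    (h : {x : A | ∃ a : A, x = a * s * a⁻¹}.Finite) :
    (Subgroup.centralizer {s} : Subgroup A).FiniteIndex := by
  haveI := h.to_subtype
  have key : ∀ a b : A, a⁻¹ * b ∈ Subgroup.centralizer {s} ↔ a * s * a⁻¹ = b * s * b⁻¹ := by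
    intro a b
    rw [Subgroup.mem_centralizer_singleton_iff]
    constructor
    · intro hm
      calc a * s * a⁻¹ = a * (s * (a⁻¹ * b)) * b⁻¹ := by group
        _ = a * ((a⁻¹ * b) * s) * b⁻¹ := by rw [hm]
        _ = b * s * b⁻¹ := by group
    · intro hm
      have : a⁻¹ * (a * s * a⁻¹) * b = a⁻¹ * (b * s * b⁻¹) * b := by rw [hm]
      calc a⁻¹ * b * s = a⁻¹ * (b * s * b⁻¹) * b := by group
        _ = a⁻¹ * (a * s * a⁻¹) * b := this.symm
        _ = s * (a⁻¹ * b) := by group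
  let f : A ⧸ Subgroup.centralizer {s} → {x : A | ∃ a : A, x = a * s * a⁻¹} :=
    Quotient.lift (fun a => (⟨a * s * a⁻¹, a, rfl⟩ : {x : A | ∃ a : A, x = a * s * a⁻¹}))
      (fun a b hab => Subtype.ext ((key a b).mp (QuotientGroup.leftRel_apply.mp hab)))
  have hfinj : Function.Injective f := by
    intro x y
    induction x using Quotient.inductionOn with
    | h a =>
      induction y using Quotient.inductionOn with
      | h b =>
        intro hxy
        exact Quotient.sound (QuotientGroup.leftRel_apply.mpr
          ((key a b).mpr (Subtype.ext_iff.mp hxy)))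
  haveI : Finite (A ⧸ Subgroup.centralizer {s}) := Finite.of_injective f hfinj
  exact Subgroup.finiteIndex_of_finite_quotient

private lemma aux_commutator_center_left {G : Type*} [Group G] {z : G}
    (hz : z ∈ Subgroup.center G) (a b : G) : ⁅a * z, b⁆ = ⁅a, b⁆ := by
  have hbz : b * z⁻¹ = z⁻¹ * b := Subgroup.mem_center_iff.mp (inv_mem hz) b
  simp only [commutatorElement_def, mul_inv_rev]
  calc a * z * b * (z⁻¹ * a⁻¹) * b⁻¹ = a * z * (b * z⁻¹) * a⁻¹ * b⁻¹ := by group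
    _ = a * z * (z⁻¹ * b) * a⁻¹ * b⁻¹ := by rw [hbz]
    _ = a * b * a⁻¹ * b⁻¹ := by group

private lemma aux_commutator_center_right {G : Type*} [Group G] {w : G}
    (hw : w ∈ Subgroup.center G) (a b : G) : ⁅a, b * w⁆ = ⁅a, b⁆ := by
  have haw : a⁻¹ * w = w * a⁻¹ := Subgroup.mem_center_iff.mp hw a⁻¹
  simp only [commutatorElement_def, mul_inv_rev]
  calc a * (b * w) * a⁻¹ * (w⁻¹ * b⁻¹) = a * b * (w * a⁻¹) * w⁻¹ * b⁻¹ := by group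
    _ = a * b * (a⁻¹ * w) * w⁻¹ * b⁻¹ := by rw [haw]
    _ = a * b * a⁻¹ * b⁻¹ := by group

/-- A group whose center has finite index has finitely many commutators. -/
private lemma aux_finite_commutatorSet {G : Type*} [Group G]
    [Subgroup.FiniteIndex (Subgroup.center G)] : Finite (commutatorSet G) := by
  haveI : Finite (G ⧸ Subgroup.center G) := inferInstance
  let F : (G ⧸ Subgroup.center G) × (G ⧸ Subgroup.center G) → G := fun p =>
    Quotient.liftOn₂ p.1 p.2 (fun a b => ⁅a, b⁆) (by
      intro a₁ b₁ a₂ b₂ ha hb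
      have ha' : a₁⁻¹ * a₂ ∈ Subgroup.center G := QuotientGroup.leftRel_apply.mp ha
      have hb' : b₁⁻¹ * b₂ ∈ Subgroup.center G := QuotientGroup.leftRel_apply.mp hb
      show ⁅a₁, b₁⁆ = ⁅a₂, b₂⁆
      have e1 : a₂ = a₁ * (a₁⁻¹ * a₂) := by group
      have e2 : b₂ = b₁ * (b₁⁻¹ * b₂) := by group
      conv_rhs => rw [e1, e2]
      rw [aux_commutator_center_left ha', aux_commutator_center_right hb'])
  have hsub : commutatorSet G ⊆ Set.range F := by
    rintro x ⟨a, b, rfl⟩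
    exact ⟨(QuotientGroup.mk a, QuotientGroup.mk b), rfl⟩
  exact ((Set.finite_range F).subset hsub).to_subtype

theorem normal_closure_finite_of_FC (A : Type*) [Group A] (C : Subgroup A)
    (hC : Finite C)
    (hFC : ∀ c ∈ C, {x : A | ∃ a : A, x = a * c * a⁻¹}.Finite) :
    ((Subgroup.normalClosure (C : Set A) : Subgroup A) : Set A).Finite := by
  classical
  set S : Set A := Group.conjugatesOfSet (C : Set A) with hSdef
  set N : Subgroup A := Subgroup.normalClosure (C : Set A) with hNdef
  have hclos : Subgroup.closure S = N := rfl
  -- conjugates of elements of S are conjugates of elements of C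
  have hSconj : ∀ s ∈ S, ∃ c ∈ C, ∃ g : A, g * c * g⁻¹ = s := by
    intro s hs
    obtain ⟨c, hc, hcs⟩ := Group.mem_conjugatesOfSet_iff.mp hs
    obtain ⟨g, hg⟩ := isConj_iff.mp hcs
    exact ⟨c, hc, g, hg⟩
  -- S is finite
  haveI := hC
  have hCfin : (C : Set A).Finite := Set.toFinite _
  have hSfin : S.Finite := by
    rw [hSdef]
    show (⋃ a ∈ (C : Set A), conjugatesOf a).Finite
    refine hCfin.biUnion fun c hc => (hFC c hc).subset ?_
    intro x hx
    obtain ⟨g, hg⟩ := isConj_iff.mp hx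
    exact ⟨g, hg.symm⟩
  -- every element of S has a finite conjugacy class
  have hSFC : ∀ s ∈ S, {x : A | ∃ a : A, x = a * s * a⁻¹}.Finite := by
    intro s hs
    obtain ⟨c, hc, g, rfl⟩ := hSconj s hs
    refine (hFC c hc).subset ?_
    rintro x ⟨a, rfl⟩
    exact ⟨a * g, by group⟩
  -- every element of S has finite order
  have hStor : ∀ s ∈ S, IsOfFinOrder s := by
    intro s hs
    obtain ⟨c, hc, g, rfl⟩ := hSconj s hs
    have h1 : IsOfFinOrder (⟨c, hc⟩ : C) := isOfFinOrder_of_finite _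
    have h2 : IsOfFinOrder c := by
      rw [← orderOf_pos_iff] at h1 ⊢
      rwa [Subgroup.orderOf_mk c hc] at h1
    obtain ⟨n, hn, hcn⟩ := isOfFinOrder_iff_pow_eq_one.mp h2
    exact isOfFinOrder_iff_pow_eq_one.mpr ⟨n, hn, by rw [conj_pow, hcn]; group⟩
  -- the centralizer of S has finite index
  haveI hSsub : Finite ↥S := hSfin.to_subtype
  set Z : Subgroup A := ⨅ s : S, Subgroup.centralizer {(s : A)} with hZdef
  haveI hZfi : Z.FiniteIndex :=
    Subgroup.finiteIndex_iInf fun s => aux_centralizer_finiteIndex _ (hSFC s s.2)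
  -- Z ∩ N is contained in the center of N
  haveI : (Z.subgroupOf N).FiniteIndex := Subgroup.instFiniteIndex_subgroupOf Z N
  have hZle : Z.subgroupOf N ≤ Subgroup.center N := by
    rintro ⟨z, hzN⟩ hz
    rw [Subgroup.mem_subgroupOf] at hz
    have hzmem : ∀ s ∈ S, z * s = s * z := by
      intro s hs
      have h1 := (Subgroup.mem_iInf.mp hz) ⟨s, hs⟩
      have h2 : z ∈ Subgroup.centralizer {s} := h1
      exact Subgroup.mem_centralizer_singleton_iff.mp h2
    have hNle : N ≤ Subgroup.centralizer {z} := by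
      rw [← hclos]
      refine Subgroup.closure_le _ |>.mpr ?_
      intro s hs
      exact Subgroup.mem_centralizer_singleton_iff.mpr (hzmem s hs).symm
    rw [Subgroup.mem_center_iff]
    rintro ⟨n, hn⟩
    have h3 := Subgroup.mem_centralizer_singleton_iff.mp (hNle hn)
    exact Subtype.ext h3
  haveI : (Subgroup.center N).FiniteIndex := Subgroup.finiteIndex_of_le hZle
  -- Schur: the commutator subgroup of N is finite
  haveI : Finite (commutatorSet N) := aux_finite_commutatorSet
  haveI hcommfin : Finite (_root_.commutator ↥N) := inferInstance
  -- N is finitely generated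
  haveI hNFG : Group.FG ↥N :=
    (Group.fg_iff_subgroup_fg N).mpr ((Subgroup.fg_iff N).mpr ⟨S, hclos, hSfin⟩)
  -- the abelianization of N is finite
  have hTtop : Subgroup.closure (N.subtype ⁻¹' S) = (⊤ : Subgroup ↥N) :=
    Subgroup.closure_preimage_eq_top S
  have habtor : Monoid.IsTorsion (Abelianization ↥N) := by
    intro x
    obtain ⟨n, rfl⟩ : ∃ n : ↥N, Abelianization.of n = x := by
      exact Quotient.inductionOn x fun g => ⟨g, rfl⟩
    have hn : n ∈ (⊤ : Subgroup ↥N) := Subgroup.mem_top n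
    rw [← hTtop] at hn
    have hle : Subgroup.closure (N.subtype ⁻¹' S) ≤
        (CommGroup.torsion (Abelianization ↥N)).comap Abelianization.of := by
      refine Subgroup.closure_le _ |>.mpr ?_
      intro t ht
      have htor : IsOfFinOrder t := by
        have h1 : IsOfFinOrder (N.subtype t) := hStor _ ht
        rw [← orderOf_pos_iff] at h1 ⊢
        rwa [orderOf_injective N.subtype Subtype.coe_injective t] at h1
      exact Subgroup.mem_comap.mpr ((CommGroup.mem_torsion _).mpr
        (Abelianization.of.isOfFinOrder htor))
    exact (CommGroup.mem_torsion _).mp (Subgroup.mem_comap.mp (hle hn))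
  haveI habFG : Group.FG (Abelianization ↥N) :=
    Group.fg_of_surjective (f := Abelianization.of (G := ↥N))
      (fun x => Quotient.inductionOn x fun g => ⟨g, rfl⟩)
  haveI habfin : Finite (Abelianization ↥N) := CommGroup.finite_of_fg_torsion _ habtor
  -- N is finite
  haveI : Finite (↥N ⧸ _root_.commutator ↥N) := habfin
  haveI : Finite ↥N :=
    Finite.of_equiv _ (Subgroup.groupEquivQuotientProdSubgroup (s := _root_.commutator ↥N)).symm
  exact Set.toFinite _
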